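/- Irreflexivity of positively iterated static type assignment: for all h, L, T, n, the judgment that T is its own (n+1)-iterated static type in L is contradictory. -/
import Mathlib


inductive Bk | abbr | abst
deriving DecidableEq

inductive Fk | appl | cast
deriving DecidableEq

inductive Tm
| sort : Nat → Tm
| lref : Nat → Tm
| bind : Bk → Tm → Tm → Tm
| flat : Fk → Tm → Tm → Tm
deriving DecidableEq

inductive Lift : Nat → Nat → Tm → Tm → Prop
| sort (l m k) : Lift l m (.sort k) (.sort k)
| lt {l m i} : i < l → Lift l m (.lref i) (.lref i)
| ge {l m i} : l ≤ i → Lift l m (.lref i) (.lref (i + m))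
| bind {l m b W₁ W₂ T₁ T₂} : Lift l m W₁ W₂ → Lift (l + 1) m T₁ T₂ →
    Lift l m (.bind b W₁ T₁) (.bind b W₂ T₂)
| flat {l m f V₁ V₂ T₁ T₂} : Lift l m V₁ V₂ → Lift l m T₁ T₂ →
    Lift l m (.flat f V₁ T₁) (.flat f V₂ T₂)

inductive Env
| null : Env
| pair : Env → Bk → Tm → Env
deriving DecidableEq

inductive Drop : Nat → Nat → Env → Env → Prop
| atom (l) : Drop l 0 .null .null
| pair {L₁ L₂ b W} : Drop 0 0 L₁ L₂ → Drop 0 0 (.pair L₁ b W) (.pair L₂ b W)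
| drop {m L₁ L₂ b W} : Drop 0 m L₁ L₂ → Drop 0 (m + 1) (.pair L₁ b W) L₂
| skip {l m L₁ L₂ b W₁ W₂} : Drop l m L₁ L₂ → Lift l m W₂ W₁ →
    Drop (l + 1) m (.pair L₁ b W₁) (.pair L₂ b W₂)

inductive Lstas (h : Nat → Nat) : Env → Tm → Tm → Nat → Prop
| sort {L k n} : Lstas h L (.sort k) (.sort (h^[n] k)) n
| zero {L K W V i} : Drop 0 i L (.pair K .abst W) → Lstas h K W V 0 →
    Lstas h L (.lref i) (.lref i) 0
| succ {L K W₁ V₁ V₂ i n} : Drop 0 i L (.pair K .abst W₁) →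
    Lstas h K W₁ V₁ n → Lift 0 (i + 1) V₁ V₂ → Lstas h L (.lref i) V₂ (n + 1)
| ldef {L K V W₁ W₂ i n} : Drop 0 i L (.pair K .abbr V) →
    Lstas h K V W₁ n → Lift 0 (i + 1) W₁ W₂ → Lstas h L (.lref i) W₂ n
| bind {L b W T U n} : Lstas h (.pair L b W) T U n →
    Lstas h L (.bind b W T) (.bind b W U) n
| appl {L V T U n} : Lstas h L T U n → Lstas h L (.flat .appl V T) (.flat .appl V U) n
| cast {L W T U n} : Lstas h L T U n → Lstas h L (.flat .cast W T) U n

/-- `Spine U T` means `U = ⓝW₁.…ⓝWⱼ.T` for some (possibly empty) chain of casts. -/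
inductive Spine : Tm → Tm → Prop
| refl (T) : Spine T T
| cast {W U T} : Spine U T → Spine (.flat .cast W U) T

lemma spine_sort {a : Nat} {T : Tm} (hs : Spine (.sort a) T) : T = .sort a := by
  cases hs; rfl

lemma spine_cast_inner {W U T : Tm} (hs : Spine U (.flat .cast W T)) : Spine U T := by
  generalize hX : (Tm.flat .cast W T : Tm) = X at hs
  induction hs with
  | refl => subst hX; exact .cast (.refl T)
  | cast h ih => exact .cast (ih hX)

lemma lt_iter {h : Nat → Nat} (hh : ∀ k, k < h k) :
    ∀ n k, 0 < n → k < h^[n] k := by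
  have hle : ∀ n k, k ≤ h^[n] k := by
    intro n
    induction n with
    | zero => simp
    | succ n ih =>
      intro k
      rw [Function.iterate_succ_apply']
      exact le_trans (ih k) (le_of_lt (hh _))
  intro n k hn
  cases n with
  | zero => omega
  | succ n =>
    rw [Function.iterate_succ_apply']
    exact lt_of_le_of_lt (hle n k) (hh _)

lemma lift_spine_lref {m i : Nat} (hm : i < m) :
    ∀ {U V : Tm}, Lift 0 m V U → Spine U (.lref i) → False := by
  intro U
  induction U with
  | sort k => intro V _ hs; cases hs
  | lref j =>
    intro V hl hs
    cases hs
    cases hl with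
    | lt h => omega
    | ge h => omega
  | bind b W T ihW ihT => intro V _ hs; cases hs
  | flat f A B ihA ihB =>
    intro V hl hs
    cases hs with
    | cast hs' =>
      cases hl with
      | flat hA hB => exact ihB hB hs'

lemma lstas_spine {h : Nat → Nat} (hh : ∀ k, k < h k) :
    ∀ {L T U n}, Lstas h L T U n → 0 < n → Spine U T → False := by
  intro L T U n hst
  induction hst with
  | @sort L k n =>
    intro hn hs
    have := spine_sort hs
    have hk : h^[n] k = k := by injection this.symm
    exact absurd hk (Nat.ne_of_lt (lt_iter hh n k hn)).symm
  | zero _ _ => intro hn _; omega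
  | @succ L K W₁ V₁ V₂ i n _ _ hl _ =>
    intro _ hs
    exact lift_spine_lref (by omega) hl hs
  | @ldef L K V W₁ W₂ i n _ _ hl _ =>
    intro _ hs
    exact lift_spine_lref (by omega) hl hs
  | bind _ ih =>
    intro hn hs
    cases hs
    exact ih hn (.refl _)
  | appl _ ih =>
    intro hn hs
    cases hs
    exact ih hn (.refl _)
  | cast _ ih =>
    intro hn hs
    exact ih hn (spine_cast_inner hs)

theorem lstas_inv_refl_pos {h : Nat → Nat} (hh : ∀ k, k < h k)
    (L : Env) (T : Tm) (n : Nat) : ¬ Lstas h L T T (n + 1) :=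
  fun hst => lstas_spine hh hst (Nat.succ_pos n) (.refl T)
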